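/- Let m ≥ 1 and let T : ℂ^{2m} → ℂ^{2m} be an additive, conjugate-linear map (T(λ·v) = λ̄·T(v) for all λ ∈ ℂ, v) which is norm-preserving (‖T(v)‖ = ‖v‖ for all v) and satisfies T ∘ T = -id. Then there exists an orthonormal basis (e₁, …, e_m, f₁, …, f_m) of ℂ^{2m} (with respect to the standard Hermitian inner product) such that T(eᵢ) = fᵢ and T(fᵢ) = -eᵢ for all i. Equivalently, T is unitarily conjugate to the standard quaternionic structure v ↦ J·v̄ on ℂ^{2m}, where J is the block matrix [[0, -I_m],[I_m, 0]]. -/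

import Mathlib

open scoped InnerProductSpace
open Submodule Module

/-- A conjugate-linear, norm-preserving map `T` of `ℂ^{2m}` with `T² = -id` (a Quaternionic
structure) admits an orthonormal basis `(e₁,…,e_m,f₁,…,f_m)` with `T(eᵢ) = fᵢ` and
`T(fᵢ) = -eᵢ`; equivalently `T` is unitarily conjugate to the standard quaternionic structure
`v ↦ J·v̄`. -/
theorem stmt17 (m : ℕ) (hm : 1 ≤ m)
    (T : EuclideanSpace ℂ (Fin m ⊕ Fin m) → EuclideanSpace ℂ (Fin m ⊕ Fin m))
    (hadd : ∀ v w : EuclideanSpace ℂ (Fin m ⊕ Fin m), T (v + w) = T v + T w)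
    (hsmul : ∀ (c : ℂ) (v : EuclideanSpace ℂ (Fin m ⊕ Fin m)),
      T (c • v) = (starRingEnd ℂ c) • T v)
    (hnorm : ∀ v : EuclideanSpace ℂ (Fin m ⊕ Fin m), ‖T v‖ = ‖v‖)
    (hinv : ∀ v : EuclideanSpace ℂ (Fin m ⊕ Fin m), T (T v) = -v) :
    ∃ e : OrthonormalBasis (Fin m ⊕ Fin m) ℂ (EuclideanSpace ℂ (Fin m ⊕ Fin m)),
      ∀ i : Fin m, T (e (Sum.inl i)) = e (Sum.inr i) ∧ T (e (Sum.inr i)) = -(e (Sum.inl i)) := by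
  classical
  -- coordinatewise conjugation
  set C : EuclideanSpace ℂ (Fin m ⊕ Fin m) → EuclideanSpace ℂ (Fin m ⊕ Fin m) :=
    fun v => WithLp.toLp 2 (fun i => starRingEnd ℂ (v i)) with hC
  have hCnorm : ∀ v, ‖C v‖ = ‖v‖ := by
    intro v
    rw [EuclideanSpace.norm_eq, EuclideanSpace.norm_eq]
    congr 1
    exact Finset.sum_congr rfl fun i _ => by simp [hC]
  have hCinner : ∀ a b, ⟪C a, C b⟫_ℂ = ⟪b, a⟫_ℂ := by
    intro a b
    rw [PiLp.inner_apply, PiLp.inner_apply]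
    refine Finset.sum_congr rfl fun i _ => ?_
    simp only [hC, RCLike.inner_apply, starRingEnd_self_apply]
    exact mul_comm _ _
  set L : EuclideanSpace ℂ (Fin m ⊕ Fin m) →ₗᵢ[ℂ] EuclideanSpace ℂ (Fin m ⊕ Fin m) :=
    { toFun := fun v => C (T v)
      map_add' := by
        intro v w
        show C (T (v + w)) = C (T v) + C (T w)
        rw [hadd]; ext i; simp [hC]
      map_smul' := by
        intro c v
        show C (T (c • v)) = c • C (T v)
        rw [hsmul]; ext i; simp [hC]
      norm_map' := fun v => (hCnorm _).trans (hnorm v) } with hL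
  have key : ∀ v w, ⟪T v, T w⟫_ℂ = ⟪w, v⟫_ℂ := by
    intro v w
    have h := L.inner_map_map w v
    rw [hL] at h
    simp only [LinearIsometry.coe_mk, LinearMap.coe_mk, AddHom.coe_mk] at h
    rwa [hCinner] at h
  have hperp : ∀ v, ⟪T v, v⟫_ℂ = 0 := by
    intro v
    have h1 : ⟪T v, T (T v)⟫_ℂ = ⟪T v, v⟫_ℂ := key v (T v)
    rw [hinv, inner_neg_right] at h1
    linear_combination (-1/2 : ℂ) * h1
  have hperp' : ∀ v, ⟪v, T v⟫_ℂ = 0 := fun v => by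
    rw [← inner_conj_symm, hperp, map_zero]
  -- the inductive construction
  have main : ∀ k : ℕ, k ≤ m → ∃ e : Fin k → EuclideanSpace ℂ (Fin m ⊕ Fin m),
      (∀ i j, ⟪e i, e j⟫_ℂ = if i = j then 1 else 0) ∧ (∀ i j, ⟪e i, T (e j)⟫_ℂ = 0) := by
    intro k
    induction k with
    | zero => exact fun _ => ⟨fun i => i.elim0, fun i => i.elim0, fun i => i.elim0⟩
    | succ k ih =>
      intro hk1
      obtain ⟨e, he1, he2⟩ := ih (le_of_lt hk1)
      set g : Fin k ⊕ Fin k → EuclideanSpace ℂ (Fin m ⊕ Fin m) :=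
        Sum.elim e (fun i => T (e i)) with hg
      set S : Submodule ℂ (EuclideanSpace ℂ (Fin m ⊕ Fin m)) := span ℂ (Set.range g) with hS
      have hSne : S ≠ ⊤ := by
        intro htop
        have h1 : finrank ℂ S ≤ Fintype.card (Fin k ⊕ Fin k) := finrank_range_le_card g
        rw [htop] at h1
        simp [finrank_top, finrank_euclideanSpace] at h1
        omega
      have hbot : Sᗮ ≠ ⊥ := fun h => hSne (Submodule.orthogonal_eq_bot_iff.mp h)
      obtain ⟨x, hxS, hx0⟩ := Submodule.exists_mem_ne_zero_of_ne_bot hbot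
      set u : EuclideanSpace ℂ (Fin m ⊕ Fin m) := (‖x‖ : ℂ)⁻¹ • x with hu
      have hxn : (‖x‖ : ℝ) ≠ 0 := norm_ne_zero_iff.mpr hx0
      have hun : ‖u‖ = 1 := by
        rw [hu, norm_smul]
        simp [hxn]
      have huu : ⟪u, u⟫_ℂ = 1 := by
        rw [inner_self_eq_norm_sq_to_K, hun]; norm_num
      have huS : u ∈ Sᗮ := Submodule.smul_mem _ _ hxS
      have hgS : ∀ i, g i ∈ S := fun i => subset_span (Set.mem_range_self i)
      have heS : ∀ i : Fin k, e i ∈ S := fun i => hgS (Sum.inl i)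
      have hTeS : ∀ i : Fin k, T (e i) ∈ S := fun i => hgS (Sum.inr i)
      have hup : ∀ y ∈ S, ⟪y, u⟫_ℂ = 0 := fun y hy => huS y hy
      have hup' : ∀ y ∈ S, ⟪u, y⟫_ℂ = 0 := fun y hy => by
        rw [← inner_conj_symm, hup y hy, map_zero]
      have hTue : ∀ i : Fin k, ⟪e i, T u⟫_ℂ = 0 := by
        intro i
        have h2 : ⟪T u, T (T (e i))⟫_ℂ = ⟪T (e i), u⟫_ℂ := key u (T (e i))
        rw [hinv, inner_neg_right, hup _ (hTeS i), neg_eq_zero] at h2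
        rw [← inner_conj_symm, h2, map_zero]
      refine ⟨Fin.snoc e u, ?_, ?_⟩
      · intro i j
        refine Fin.lastCases ?_ (fun i' => ?_) i <;>
          refine Fin.lastCases ?_ (fun j' => ?_) j
        · simp [Fin.snoc_last, huu, hun]
        · rw [if_neg (Fin.castSucc_lt_last j').ne']
          simp only [Fin.snoc_last, Fin.snoc_castSucc]
          exact hup' _ (heS j')
        · rw [if_neg (Fin.castSucc_lt_last i').ne]
          simp only [Fin.snoc_last, Fin.snoc_castSucc]
          exact hup _ (heS i')
        · simp only [Fin.snoc_castSucc, Fin.castSucc_inj]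
          exact he1 i' j'
      · intro i j
        refine Fin.lastCases ?_ (fun i' => ?_) i <;>
          refine Fin.lastCases ?_ (fun j' => ?_) j
        · simp only [Fin.snoc_last]
          exact hperp' u
        · simp only [Fin.snoc_last, Fin.snoc_castSucc]
          exact hup' _ (hTeS j')
        · simp only [Fin.snoc_last, Fin.snoc_castSucc]
          exact hTue i'
        · simp only [Fin.snoc_castSucc]
          exact he2 i' j'
  obtain ⟨e, he1, he2⟩ := main m le_rfl
  set g : Fin m ⊕ Fin m → EuclideanSpace ℂ (Fin m ⊕ Fin m) :=
    Sum.elim e (fun i => T (e i)) with hg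
  have horth : Orthonormal ℂ g := by
    rw [orthonormal_iff_ite]
    rintro (i | i) (j | j)
    · simpa [hg] using he1 i j
    · simpa [hg] using he2 i j
    · simp only [hg, Sum.elim_inl, Sum.elim_inr]
      rw [← inner_conj_symm, he2 j i, map_zero, if_neg (by simp)]
    · simp only [hg, Sum.elim_inr]
      rw [key]
      rw [he1 j i]
      simp [eq_comm]
  have hcard : Fintype.card (Fin m ⊕ Fin m) =
      finrank ℂ (EuclideanSpace ℂ (Fin m ⊕ Fin m)) := by
    rw [finrank_euclideanSpace]
  have hspan : span ℂ (Set.range g) = ⊤ :=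
    horth.linearIndependent.span_eq_top_of_card_eq_finrank' hcard
  refine ⟨OrthonormalBasis.mk horth hspan.ge, fun i => ?_⟩
  rw [OrthonormalBasis.coe_mk]
  refine ⟨rfl, ?_⟩
  show T (T (e i)) = -(e i)
  rw [hinv]
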